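/- Fix indices $r \ne s$ in $\{1,\dots,n\}$ and let $g(p) = \frac{p^r}{p^s + p^r}$ on the open simplex $\Delta_n$. Then $\sum_{i,j=1}^n p^i(\delta^i_j - p^j)\, \partial_{p^i}\partial_{p^j} g(p) = 0$ for all $p \in \Delta_n$. -/

import Mathlib

open scoped BigOperators

noncomputable section

/-- The open standard orthogonal simplex in ℝⁿ. -/
def stdSimplexO (n : ℕ) : Set (Fin n → ℝ) :=
  {p | (∀ i, 0 < p i) ∧ ∑ i, p i < 1}

/-- The closed standard orthogonal simplex in ℝⁿ. -/
def stdSimplexC (n : ℕ) : Set (Fin n → ℝ) :=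
  {p | (∀ i, 0 ≤ p i) ∧ ∑ i, p i ≤ 1}

/-- First partial derivative in coordinate direction `i`. -/
def pd {n : ℕ} (u : (Fin n → ℝ) → ℝ) (i : Fin n) (p : Fin n → ℝ) : ℝ :=
  fderiv ℝ u p (Pi.single i 1)

/-- Second partial derivative `∂_j ∂_i`. -/
def pd2 {n : ℕ} (u : (Fin n → ℝ) → ℝ) (i j : Fin n) (p : Fin n → ℝ) : ℝ :=
  pd (pd u i) j p

/-- Kronecker delta. -/
def kdelta {n : ℕ} (i j : Fin n) : ℝ := if i = j then 1 else 0

/-- Kolmogorov backward (Wright–Fisher) operator `L_n^*`. -/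
def Lb {n : ℕ} (u : (Fin n → ℝ) → ℝ) (p : Fin n → ℝ) : ℝ :=
  (1/2) * ∑ i, ∑ j, p i * (kdelta i j - p j) * pd2 u i j p

/-- Kolmogorov forward (Wright–Fisher) operator `L_n`. -/
def Lf {n : ℕ} (u : (Fin n → ℝ) → ℝ) (p : Fin n → ℝ) : ℝ :=
  (1/2) * ∑ i, ∑ j, pd2 (fun q => q i * (kdelta i j - q j) * u q) i j p

lemma hasFDerivAt_gaux {n : ℕ} (r s : Fin n) (q : Fin n → ℝ) (ht : q s + q r ≠ 0) :
    HasFDerivAt (fun q : Fin n → ℝ => q r / (q s + q r))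
      (q r • ((-((q s + q r)^2)⁻¹) • ((ContinuousLinearMap.proj s : (Fin n → ℝ) →L[ℝ] ℝ)
            + ContinuousLinearMap.proj r))
        + (q s + q r)⁻¹ • (ContinuousLinearMap.proj r : (Fin n → ℝ) →L[ℝ] ℝ)) q := by
  have HT : HasFDerivAt (fun q : Fin n → ℝ => q s + q r)
      ((ContinuousLinearMap.proj s : (Fin n → ℝ) →L[ℝ] ℝ) + ContinuousLinearMap.proj r) q :=
    (hasFDerivAt_apply s q).add (hasFDerivAt_apply r q)
  have Hinv := (hasDerivAt_inv ht).comp_hasFDerivAt q HT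
  have H := (hasFDerivAt_apply r q).mul Hinv
  have hfun : (fun q : Fin n → ℝ => q r / (q s + q r))
      = fun q : Fin n → ℝ => q r * (q s + q r)⁻¹ := by
    funext q; rw [div_eq_mul_inv]
  rw [hfun]
  simpa [Function.comp, Pi.mul_def] using H

lemma pd_g {n : ℕ} (r s : Fin n) (hrs : r ≠ s) (i : Fin n) (q : Fin n → ℝ)
    (hq : 0 < q s + q r) :
    pd (fun q => q r / (q s + q r)) i q
      = (q s * kdelta i r - q r * kdelta i s) * (((q s + q r)^2)⁻¹) := by
  have ht : q s + q r ≠ 0 := ne_of_gt hq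
  rw [pd, (hasFDerivAt_gaux r s q ht).fderiv]
  simp only [ContinuousLinearMap.add_apply, ContinuousLinearMap.smul_apply,
    ContinuousLinearMap.proj_apply, smul_eq_mul, Pi.single_apply, kdelta]
  rcases eq_or_ne i r with h1 | h1 <;> rcases eq_or_ne i s with h2 | h2
  · exact absurd (h1.symm.trans h2) hrs
  · subst h1; simp [Ne.symm hrs, h2]; field_simp; ring
  · subst h2; simp [hrs, h1]
  · simp [Ne.symm h1, Ne.symm h2, h1, h2]

lemma pd2_g {n : ℕ} (r s : Fin n) (hrs : r ≠ s) (i j : Fin n) (q : Fin n → ℝ)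
    (hq : 0 < q s + q r) :
    pd2 (fun q => q r / (q s + q r)) i j q
      = (q s * kdelta i r - q r * kdelta i s)
          * (-(2 * (q s + q r)) / ((q s + q r)^2)^2) * (kdelta j s + kdelta j r)
        + ((q s + q r)^2)⁻¹ * (kdelta i r * kdelta j s - kdelta i s * kdelta j r) := by
  have ht : q s + q r ≠ 0 := ne_of_gt hq
  have hU : IsOpen {x : Fin n → ℝ | 0 < x s + x r} :=
    isOpen_lt continuous_const ((continuous_apply s).add (continuous_apply r))
  have heq : pd (fun q : Fin n → ℝ => q r / (q s + q r)) i
      =ᶠ[nhds q] fun x : Fin n → ℝ =>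
        (x s * kdelta i r - x r * kdelta i s) * (((x s + x r)^2)⁻¹) :=
    Filter.eventuallyEq_of_mem (hU.mem_nhds hq) fun x hx => pd_g r s hrs i x hx
  rw [pd2, pd, heq.fderiv_eq]
  have HT : HasFDerivAt (fun q : Fin n → ℝ => q s + q r)
      ((ContinuousLinearMap.proj s : (Fin n → ℝ) →L[ℝ] ℝ) + ContinuousLinearMap.proj r) q :=
    (hasFDerivAt_apply s q).add (hasFDerivAt_apply r q)
  have HN : HasFDerivAt (fun x : Fin n → ℝ => x s * kdelta i r - x r * kdelta i s)
      ((kdelta i r) • (ContinuousLinearMap.proj s : (Fin n → ℝ) →L[ℝ] ℝ)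
        - (kdelta i s) • ContinuousLinearMap.proj r) q :=
    ((hasFDerivAt_apply s q).mul_const _).sub ((hasFDerivAt_apply r q).mul_const _)
  have Hφ := ((hasDerivAt_pow 2 (q s + q r)).inv (pow_ne_zero 2 ht)).comp_hasFDerivAt q HT
  have H := HN.mul Hφ
  rw [(by simpa [Function.comp, Pi.mul_def, Pi.inv_def] using H :
    HasFDerivAt (fun x : Fin n → ℝ =>
        (x s * kdelta i r - x r * kdelta i s) * (((x s + x r)^2)⁻¹))
      ((q s * kdelta i r - q r * kdelta i s) •
          ((-(↑2 * (q s + q r) ^ (2-1)) / ((q s + q r)^2)^2) •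
            ((ContinuousLinearMap.proj s : (Fin n → ℝ) →L[ℝ] ℝ) + ContinuousLinearMap.proj r))
        + (((q s + q r)^2)⁻¹) •
            ((kdelta i r) • (ContinuousLinearMap.proj s : (Fin n → ℝ) →L[ℝ] ℝ)
              - (kdelta i s) • ContinuousLinearMap.proj r)) q).fderiv]
  simp only [ContinuousLinearMap.add_apply, ContinuousLinearMap.smul_apply,
    ContinuousLinearMap.sub_apply, ContinuousLinearMap.proj_apply, smul_eq_mul,
    Pi.single_apply]
  rcases eq_or_ne j r with h1 | h1 <;> rcases eq_or_ne j s with h2 | h2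
  · exact absurd (h1.symm.trans h2) hrs
  · subst h1; simp [kdelta, Ne.symm hrs, h2]
  · subst h2; simp [kdelta, hrs, h1]
  · simp [kdelta, Ne.symm h1, Ne.symm h2, h1, h2]

lemma sum_reduce {n : ℕ} (r s : Fin n) (hrs : r ≠ s) (G : Fin n → ℝ)
    (hG : ∀ i, i ≠ r → i ≠ s → G i = 0) : ∑ i, G i = G r + G s := by
  rw [← Finset.sum_subset (Finset.subset_univ ({r, s} : Finset (Fin n)))
      (fun x _ hx => hG x (fun h => hx (by simp [h])) (fun h => hx (by simp [h])))]
  exact Finset.sum_pair hrs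

theorem stmt1 (n : ℕ) (r s : Fin n) (hrs : r ≠ s) :
    ∀ p ∈ stdSimplexO n,
      ∑ i, ∑ j, p i * (kdelta i j - p j) *
        pd2 (fun q => q r / (q s + q r)) i j p = 0 := by
  intro p hp
  obtain ⟨hpos, -⟩ := hp
  have hq : 0 < p s + p r := add_pos (hpos s) (hpos r)
  have ht : p s + p r ≠ 0 := ne_of_gt hq
  have hpd2 := fun i j => pd2_g r s hrs i j p hq
  simp only [hpd2]
  rw [sum_reduce r s hrs _ (fun i hir his => Finset.sum_eq_zero fun j _ => by
    simp [kdelta, hir, his])]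
  rw [sum_reduce r s hrs _ (fun j hjr hjs => by
    simp [kdelta, hjr, hjs])]
  rw [sum_reduce r s hrs _ (fun j hjr hjs => by
    simp [kdelta, hjr, hjs])]
  simp only [kdelta, if_pos rfl, if_neg hrs, if_neg (Ne.symm hrs)]
  field_simp
  ring
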